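/- arXiv:2312.01813 — 2 statements merged into one kernel-verified Lean document; each statement's English description precedes it below -/
import Mathlib

section
/- Distortion premium representation via marginal indemnities: for every I ∈ 𝓘 with marginal indemnification q (so I(x) = ∫_0^x q(t) dt, 0 ≤ q ≤ 1) and every increasing function h : [0,1] → ℝ with h(0) = 0, one has ∫_0^∞ h(S_{I(X)}(z)) dz = ∫_0^M h(S_X(x))·q(x) dx. In particular, for any increasing distortion h with h(0)=0 and h(1)=1, the distortion premium Π_h(I(X)) := ∫_0^∞ h(S_{I(X)}(z)) dz equals ∫_0^M h(S_X(x))·q(x) dx. -/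
open MeasureTheory Set Filter ENNReal NNReal Topology Function

noncomputable section

lemma aux_stieltjes_zero_of_nonpos {g : ℝ → ℝ} (hg : Monotone g) (hg0 : ∀ s ≤ (0:ℝ), g s = 0)
    {b : ℝ} (hb : b < 0) : hg.stieltjesFunction b = 0 := by
  have h1 : hg.stieltjesFunction b ≤ g (b/2) := hg.rightLim_le (by linarith)
  have h2 : g b ≤ hg.stieltjesFunction b := hg.le_rightLim le_rfl
  rw [hg0 b hb.le] at h2
  rw [hg0 (b/2) (by linarith)] at h1
  linarith

lemma aux_stieltjes_tendsto_atBot {g : ℝ → ℝ} (hg : Monotone g) (hg0 : ∀ s ≤ (0:ℝ), g s = 0) :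
    Tendsto (hg.stieltjesFunction : ℝ → ℝ) atBot (𝓝 0) := by
  apply Tendsto.congr' (f₁ := fun _ => (0:ℝ))
  · filter_upwards [Iio_mem_atBot (0:ℝ)] with b hb
    exact (aux_stieltjes_zero_of_nonpos hg hg0 hb).symm
  · exact tendsto_const_nhds

lemma aux_nu_Iio {g : ℝ → ℝ} (hg : Monotone g) (hg0 : ∀ s ≤ (0:ℝ), g s = 0)
    (hgnn : ∀ s, 0 ≤ g s) (s : ℝ) :
    hg.stieltjesFunction.measure (Iio s) = ENNReal.ofReal (leftLim (hg.stieltjesFunction) s) := by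
  set f := hg.stieltjesFunction with hf
  have hIic : f.measure (Iic (s-1)) = ENNReal.ofReal (f (s-1)) := by
    rw [f.measure_Iic (aux_stieltjes_tendsto_atBot hg hg0), sub_zero]
  have hsplit : Iio s = Iic (s-1) ∪ Ioo (s-1) s := by
    ext x
    simp only [mem_Iio, mem_union, mem_Iic, mem_Ioo]
    constructor
    · intro hx
      rcases le_or_gt x (s-1) with h | h
      · exact Or.inl h
      · exact Or.inr ⟨h, hx⟩
    · rintro (h | h) <;> [linarith; exact h.2]
  have hdisj : Disjoint (Iic (s-1)) (Ioo (s-1) s) := by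
    apply Set.disjoint_left.2
    intro x hx hx2
    exact absurd hx2.1 (not_lt.2 hx)
  rw [hsplit, measure_union hdisj measurableSet_Ioo, hIic, f.measure_Ioo]
  have h1 : 0 ≤ f (s-1) := by
    have := hg.le_rightLim (le_refl (s-1))
    exact le_trans (hgnn (s-1)) this
  have h2 : f (s-1) ≤ leftLim f s := f.mono.le_leftLim (by linarith)
  rw [← ENNReal.ofReal_add h1 (by linarith)]
  ring_nf

lemma aux_nu_Iio_cont {g : ℝ → ℝ} (hg : Monotone g) (hg0 : ∀ s ≤ (0:ℝ), g s = 0)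
    (hgnn : ∀ s, 0 ≤ g s) {s : ℝ} (hc : ContinuousAt g s) :
    hg.stieltjesFunction.measure (Iio s) = ENNReal.ofReal (g s) := by
  rw [aux_nu_Iio hg hg0 hgnn s]
  congr 1
  set f := hg.stieltjesFunction with hf
  have hgl : leftLim g s = g s :=
    tendsto_nhds_unique (hg.tendsto_leftLim s) (hc.tendsto.mono_left nhdsWithin_le_nhds)
  have hub : leftLim f s ≤ g s := by
    apply le_of_tendsto (f.mono.tendsto_leftLim s)
    filter_upwards [self_mem_nhdsWithin] with b (hb : b < s)
    exact hg.rightLim_le hb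
  have hlb : g s ≤ leftLim f s := by
    rw [← hgl]
    apply le_of_tendsto (hg.tendsto_leftLim s)
    filter_upwards [self_mem_nhdsWithin] with b (hb : b < s)
    exact le_trans (hg.le_rightLim le_rfl) (f.mono.le_leftLim hb)
  linarith

lemma aux_nu_Iio_zero {g : ℝ → ℝ} (hg : Monotone g) (hg0 : ∀ s ≤ (0:ℝ), g s = 0)
    (hgnn : ∀ s, 0 ≤ g s) {s : ℝ} (hs : s ≤ 0) :
    hg.stieltjesFunction.measure (Iio s) = 0 := by
  rw [aux_nu_Iio hg hg0 hgnn s]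
  set f := hg.stieltjesFunction with hf
  have hub : leftLim f s ≤ 0 := by
    apply le_of_tendsto (f.mono.tendsto_leftLim s)
    filter_upwards [self_mem_nhdsWithin] with b (hb : b < s)
    exact le_of_eq (aux_stieltjes_zero_of_nonpos hg hg0 (lt_of_lt_of_le hb hs))
  simpa [ENNReal.ofReal_eq_zero] using hub

/-- distortion premium representation via marginal indemnities.  For every
`I ∈ 𝓘` with marginal indemnification `q` (so `I(x) = ∫_0^x q(t) dt`, `0 ≤ q ≤ 1`) and
every increasing `h : [0,1] → ℝ` with `h(0) = 0`,
`∫_0^∞ h(S_{I(X)}(z)) dz = ∫_0^M h(S_X(x))·q(x) dx`. -/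
theorem distortion_premium_marginal_representation
    {Ω : Type*} [MeasurableSpace Ω] (μ : Measure Ω) [IsProbabilityMeasure μ]
    -- the probability space is atomless
    (hatomless : ∀ s : Set Ω, MeasurableSet s → 0 < μ s →
      ∃ t, t ⊆ s ∧ MeasurableSet t ∧ 0 < μ t ∧ μ t < μ s)
    -- the nonnegative integrable loss X
    (X : Ω → ℝ) (hXmeas : Measurable X) (hXnonneg : ∀ ω, 0 ≤ X ω)
    (hXint : Integrable X μ)
    -- the essential supremum M ∈ (0,∞] of X
    (M : ℝ≥0∞) (hM : 0 < M)
    (hXleM : ∀ᵐ ω ∂μ, ENNReal.ofReal (X ω) ≤ M)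
    -- the survival function of X, continuous and strictly decreasing on [0,M]
    (S : ℝ → ℝ) (hS : S = fun x => (μ {ω | x < X ω}).toReal)
    (hScont : ContinuousOn S {x : ℝ | 0 ≤ x ∧ ENNReal.ofReal x ≤ M})
    (hSanti : StrictAntiOn S {x : ℝ | 0 ≤ x ∧ ENNReal.ofReal x ≤ M})
    :
    ∀ (I : ℝ → ℝ), I 0 = 0 →
      (∀ ⦃x y : ℝ⦄, 0 ≤ y → y ≤ x → ENNReal.ofReal x < M →
        0 ≤ I x - I y ∧ I x - I y ≤ x - y) →
      ∀ (q : ℝ → ℝ), Measurable q → (∀ t : ℝ, 0 ≤ q t ∧ q t ≤ 1) →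
      (∀ x : ℝ, 0 ≤ x → ENNReal.ofReal x < M → I x = ∫ t in (0:ℝ)..x, q t) →
      ∀ (h : ℝ → ℝ), MonotoneOn h (Set.Icc 0 1) → h 0 = 0 →
      (∫ z in Set.Ioi (0:ℝ), h ((μ {ω | z < I (X ω)}).toReal))
        = ∫ x in {x : ℝ | 0 ≤ x ∧ ENNReal.ofReal x < M}, h (S x) * q x := by
  intro I hI0 hIlip q hqmeas hq01 hIq h hmono hh0
  classical
  set D : Set ℝ := {x : ℝ | 0 ≤ x ∧ ENNReal.ofReal x < M} with hDdef
  set Db : Set ℝ := {x : ℝ | 0 ≤ x ∧ ENNReal.ofReal x ≤ M} with hDbdef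
  have hDsub : D ⊆ Db := fun x hx => ⟨hx.1, hx.2.le⟩
  have hDmeas : MeasurableSet D := by
    have : D = Ici (0:ℝ) ∩ (fun x : ℝ => ENNReal.ofReal x) ⁻¹' Iio M := by
      ext x; simp [hDdef]
    rw [this]
    exact measurableSet_Ici.inter (ENNReal.measurable_ofReal measurableSet_Iio)
  -- the extended primitive J of q
  set J : ℝ → ℝ := fun x => ∫ t in (0:ℝ)..x, q t with hJdef
  have hqInt : ∀ a b : ℝ, IntervalIntegrable q volume a b := by
    intro a b
    rw [intervalIntegrable_iff]
    apply Measure.integrableOn_of_bounded (M := 1) measure_Ioc_lt_top.ne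
      hqmeas.aestronglyMeasurable
    filter_upwards with t
    rw [Real.norm_eq_abs, abs_le]
    exact ⟨by linarith [(hq01 t).1], (hq01 t).2⟩
  have hJadd : ∀ a b : ℝ, J b - J a = ∫ t in a..b, q t := by
    intro a b
    have := intervalIntegral.integral_add_adjacent_intervals (hqInt 0 a) (hqInt a b)
    simp only [hJdef]
    linarith [this]
  have hJmono : Monotone J := by
    intro a b hab
    have h1 : 0 ≤ ∫ t in a..b, q t :=
      intervalIntegral.integral_nonneg hab fun t _ => (hq01 t).1
    have := hJadd a b
    linarith
  have hJlip : ∀ a b : ℝ, a ≤ b → J b - J a ≤ b - a := by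
    intro a b hab
    rw [hJadd a b]
    calc ∫ t in a..b, q t ≤ ∫ t in a..b, (1:ℝ) := by
          apply intervalIntegral.integral_mono_on hab (hqInt a b) intervalIntegrable_const
          exact fun t _ => (hq01 t).2
      _ = b - a := by simp
  have hJcont : Continuous J := by
    have : LipschitzWith 1 J := by
      apply LipschitzWith.of_dist_le_mul
      intro a b
      rw [Real.dist_eq, Real.dist_eq, NNReal.coe_one, one_mul]
      rcases le_total a b with hab | hab
      · rw [abs_sub_comm (J a), abs_sub_comm a b,
          abs_of_nonneg (sub_nonneg.2 (hJmono hab)), abs_of_nonneg (sub_nonneg.2 hab)]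
        exact hJlip a b hab
      · rw [abs_of_nonneg (sub_nonneg.2 (hJmono hab)), abs_of_nonneg (sub_nonneg.2 hab)]
        exact hJlip b a hab
    exact this.continuous
  have hJ0 : J 0 = 0 := by simp [hJdef]
  have hJnn : ∀ x, 0 ≤ x → 0 ≤ J x := fun x hx => by
    have := hJmono hx; rwa [hJ0] at this
  have hJle : ∀ x, 0 ≤ x → J x ≤ x := by
    intro x hx
    have := hJlip 0 x hx
    rw [hJ0] at this; linarith
  have hJlint : ∀ c : ℝ, 0 ≤ c →
      (∫⁻ x in Ico (0:ℝ) c, ENNReal.ofReal (q x)) = ENNReal.ofReal (J c) := by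
    intro c hc
    rw [setLIntegral_congr Ico_ae_eq_Ioc]
    have hInt : IntegrableOn q (Ioc 0 c) volume := by
      have := hqInt 0 c
      rwa [intervalIntegrable_iff, uIoc_of_le hc] at this
    rw [← ofReal_integral_eq_lintegral_ofReal hInt
      (Filter.Eventually.of_forall fun t => (hq01 t).1)]
    congr 1
    rw [hJdef]
    exact (intervalIntegral.integral_of_le hc).symm
  -- basic facts about S
  have hSanti' : Antitone S := by
    intro a b hab
    rw [hS]
    apply ENNReal.toReal_mono (measure_ne_top μ _)
    exact measure_mono fun ω hω => lt_of_le_of_lt hab hω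
  have hSnn : ∀ x, 0 ≤ S x := fun x => by rw [hS]; exact ENNReal.toReal_nonneg
  have hSle1 : ∀ x, S x ≤ 1 := by
    intro x
    rw [hS]
    have := prob_le_one (μ := μ) (s := {ω | x < X ω})
    calc (μ {ω | x < X ω}).toReal ≤ (1:ℝ≥0∞).toReal := ENNReal.toReal_mono one_ne_top this
      _ = 1 := by simp
  have hSmeas : Measurable S := hSanti'.measurable
  have hSpos : ∀ x ∈ D, 0 < S x := by
    intro x hx
    by_cases hMt : M = ⊤
    · have hy : (x+1) ∈ Db := ⟨by linarith [hx.1], by simp [hMt]⟩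
      have h1 := hSanti (hDsub hx) hy (by linarith)
      have h2 := hSnn (x+1)
      linarith
    · have hmm : M.toReal ∈ Db := ⟨ENNReal.toReal_nonneg, by rw [ENNReal.ofReal_toReal hMt]⟩
      have hxm : x < M.toReal := (ENNReal.ofReal_lt_iff_lt_toReal hx.1 hMt).1 hx.2
      have h1 := hSanti (hDsub hx) hmm hxm
      have h2 := hSnn M.toReal
      linarith
  have hSsmall : ∀ p : ℝ, 0 < p → ∃ b : ℝ, 0 ≤ b ∧ S b ≤ p := by
    intro p hp
    have hiInter : ⋂ n : ℕ, {ω | (n:ℝ) < X ω} = ∅ := by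
      ext ω
      simp only [mem_iInter, mem_setOf_eq, mem_empty_iff_false, iff_false, not_forall, not_lt]
      obtain ⟨n, hn⟩ := exists_nat_gt (X ω)
      exact ⟨n, hn.le⟩
    have htend : Tendsto (fun n : ℕ => μ {ω | (n:ℝ) < X ω}) atTop (𝓝 0) := by
      have hten := tendsto_measure_iInter_atTop (μ := μ)
        (s := fun n : ℕ => {ω | (n:ℝ) < X ω})
        (fun n => (hXmeas measurableSet_Ioi).nullMeasurableSet)
        (fun a b hab ω hω => by
          simp only [mem_setOf_eq] at hω ⊢
          exact lt_of_le_of_lt (Nat.cast_le.2 hab) hω)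
        ⟨0, measure_ne_top μ _⟩
      rw [hiInter] at hten
      simpa [Function.comp_def] using hten
    have hev : ∀ᶠ n : ℕ in atTop, μ {ω | (n:ℝ) < X ω} < ENNReal.ofReal p :=
      htend.eventually_lt_const (ENNReal.ofReal_pos.2 hp)
    obtain ⟨n, hn⟩ := hev.exists
    refine ⟨n, n.cast_nonneg, ?_⟩
    rw [hS]
    exact ENNReal.toReal_le_of_le_ofReal hp.le hn.le
  have hXlem : M ≠ ⊤ → ∀ᵐ ω ∂μ, X ω ≤ M.toReal := by
    intro hMt
    filter_upwards [hXleM] with ω hω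
    exact (ENNReal.ofReal_le_iff_le_toReal hMt).1 hω
  have hSm0 : M ≠ ⊤ → S M.toReal = 0 := by
    intro hMt
    have h1 : ∀ᵐ ω ∂μ, ¬ (M.toReal < X ω) := by
      filter_upwards [hXlem hMt] with ω hω
      exact not_lt.2 hω
    rw [ae_iff] at h1
    simp only [not_not] at h1
    rw [hS]
    simp only []
    rw [h1, ENNReal.toReal_zero]
  -- a.e., X lands in D
  have hXD : ∀ᵐ ω ∂μ, X ω ∈ D := by
    by_cases hMt : M = ⊤
    · filter_upwards with ω
      exact ⟨hXnonneg ω, by simp [hMt]⟩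
    · set m := M.toReal with hm
      have hm0 : 0 < m := ENNReal.toReal_pos hM.ne' hMt
      set x : ℕ → ℝ := fun n => m - m/(n+2) with hxdef
      have hxlt : ∀ n, x n < m := by
        intro n
        have : 0 < m/((n:ℝ)+2) := by positivity
        simp only [hxdef]
        linarith
      have hxnn : ∀ n, 0 ≤ x n := by
        intro n
        have h2 : m/((n:ℝ)+2) ≤ m/2 := by
          apply div_le_div_of_nonneg_left hm0.le (by norm_num)
          have : (0:ℝ) ≤ n := n.cast_nonneg
          linarith
        simp only [hxdef]
        linarith
      have hxmono : Monotone x := by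
        intro a b hab
        simp only [hxdef]
        have : m/((b:ℝ)+2) ≤ m/((a:ℝ)+2) := by
          apply div_le_div_of_nonneg_left hm0.le
          · have : (0:ℝ) ≤ a := a.cast_nonneg
            linarith
          · have : (a:ℝ) ≤ b := Nat.cast_le.2 hab
            linarith
        linarith
      have hxtend : Tendsto x atTop (𝓝 m) := by
        have h1 : Tendsto (fun n : ℕ => ((n:ℝ)+2)) atTop atTop :=
          tendsto_atTop_add_const_right atTop 2 tendsto_natCast_atTop_atTop
        have h2 : Tendsto (fun n : ℕ => m/((n:ℝ)+2)) atTop (𝓝 0) :=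
          Tendsto.div_atTop tendsto_const_nhds h1
        have h3 := tendsto_const_nhds (x := m) (f := atTop (α := ℕ)) |>.sub h2
        simpa using h3
      have hxD : ∀ n, x n ∈ Db := by
        intro n
        refine ⟨hxnn n, ?_⟩
        rw [ENNReal.ofReal_le_iff_le_toReal hMt]
        exact (hxlt n).le
      have hμseq : Tendsto (fun n => μ {ω | x n < X ω}) atTop (𝓝 (μ {ω | m ≤ X ω})) := by
        have hInter : ⋂ n, {ω | x n < X ω} = {ω | m ≤ X ω} := by
          ext ω
          simp only [mem_iInter, mem_setOf_eq]
          constructor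
          · intro hω
            exact le_of_tendsto' hxtend fun n => (hω n).le
          · intro hω n
            exact lt_of_lt_of_le (hxlt n) hω
        have hten := tendsto_measure_iInter_atTop (μ := μ)
          (s := fun n : ℕ => {ω | x n < X ω})
          (fun n => (hXmeas measurableSet_Ioi).nullMeasurableSet)
          (fun a b hab ω hω => by
            simp only [mem_setOf_eq] at hω ⊢
            exact lt_of_le_of_lt (hxmono hab) hω)
          ⟨0, measure_ne_top μ _⟩
        rwa [hInter] at hten
      have hSseq : Tendsto (fun n => S (x n)) atTop (𝓝 (S m)) := by
        have hcw : ContinuousWithinAt S Db m :=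
          hScont m ⟨hm0.le, by rw [ENNReal.ofReal_toReal hMt]⟩
        apply hcw.tendsto.comp
        apply tendsto_nhdsWithin_of_tendsto_nhds_of_eventually_within _ hxtend
        exact Eventually.of_forall hxD
      have h2 : Tendsto (fun n => S (x n)) atTop (𝓝 ((μ {ω | m ≤ X ω}).toReal)) := by
        rw [hS]
        exact (ENNReal.tendsto_toReal (measure_ne_top μ _)).comp hμseq
      have hEq : (μ {ω | m ≤ X ω}).toReal = S m := tendsto_nhds_unique h2 hSseq
      have hμm : μ {ω | m ≤ X ω} = μ {ω | m < X ω} := by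
        apply (ENNReal.toReal_eq_toReal_iff' (measure_ne_top μ _) (measure_ne_top μ _)).1
        rw [hEq, hS]
      have hdiff : μ ({ω | m ≤ X ω} \ {ω | m < X ω}) = 0 := by
        have hsub : {ω | m < X ω} ⊆ {ω | m ≤ X ω} := fun ω hω => by
          simp only [mem_setOf_eq] at hω ⊢
          exact le_of_lt hω
        rw [measure_diff hsub ((hXmeas measurableSet_Ioi).nullMeasurableSet)
          (measure_ne_top μ _), hμm, tsub_self]
      have hXne : ∀ᵐ ω ∂μ, X ω ≠ m := by
        rw [ae_iff]
        simp only [not_not]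
        apply measure_mono_null _ hdiff
        intro ω hω
        simp only [mem_setOf_eq] at hω
        exact ⟨le_of_eq hω.symm, by simp [hω]⟩
      filter_upwards [hXlem hMt, hXne] with ω h1 h2
      exact ⟨hXnonneg ω, by
        rw [ENNReal.ofReal_lt_iff_lt_toReal (hXnonneg ω) hMt]
        exact lt_of_le_of_ne h1 h2⟩
  -- survival function of J ∘ X
  set Tm : ℝ → ℝ≥0∞ := fun z => μ {ω | z < J (X ω)} with hTmdef
  set T : ℝ → ℝ := fun z => (Tm z).toReal with hTdef
  have hTanti : Antitone T := by
    intro a b hab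
    apply ENNReal.toReal_mono (measure_ne_top μ _)
    exact measure_mono fun ω hω => lt_of_le_of_lt hab hω
  have hTmeas : Measurable T := hTanti.measurable
  have hTnn : ∀ z, 0 ≤ T z := fun z => ENNReal.toReal_nonneg
  have hTle1 : ∀ z, T z ≤ 1 := by
    intro z
    have := prob_le_one (μ := μ) (s := {ω | z < J (X ω)})
    calc (Tm z).toReal ≤ (1:ℝ≥0∞).toReal := ENNReal.toReal_mono one_ne_top this
      _ = 1 := by simp
  have hTleS : ∀ z, 0 ≤ z → T z ≤ S z := by
    intro z hz
    rw [hS]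
    apply ENNReal.toReal_mono (measure_ne_top μ _)
    apply measure_mono
    intro ω hω
    exact lt_of_lt_of_le hω (hJle (X ω) (hXnonneg ω))
  have hIJ : ∀ z : ℝ, μ {ω | z < I (X ω)} = Tm z := by
    intro z
    apply measure_congr
    rw [Filter.eventuallyEq_set]
    filter_upwards [hXD] with ω hω
    have hIJω : I (X ω) = J (X ω) := hIq (X ω) hω.1 hω.2
    simp only [Set.mem_setOf_eq, hIJω]
  -- strict decrease of T where it is positive
  have hfull : μ {ω | X ω ∈ D}ᶜ = 0 := by
    rw [compl_setOf]
    exact ae_iff.1 hXD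
  have hTinj : ∀ z₁ z₂ : ℝ, 0 < z₁ → z₁ < z₂ → 0 < T z₂ → T z₂ < T z₁ := by
    intro z₁ z₂ hz1 hz12 hT2
    have hTm2 : Tm z₂ ≠ 0 := by
      intro h0
      rw [hTdef] at hT2
      simp only [h0, ENNReal.toReal_zero, lt_self_iff_false] at hT2
    have hTm2' : μ ({ω | z₂ < J (X ω)} ∩ {ω | X ω ∈ D}) ≠ 0 := by
      rw [measure_inter_conull hfull]
      exact hTm2
    obtain ⟨ω0, hω0, hω0D⟩ := nonempty_of_measure_ne_zero hTm2'
    set c := X ω0 with hcdef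
    have hc0 : 0 ≤ c := hXnonneg ω0
    have hJc : z₂ < J c := hω0
    set u := z₁ + (z₂ - z₁)/3 with hudef
    set v := z₁ + 2*((z₂ - z₁)/3) with hvdef
    have hu_mem : u ∈ Icc (J 0) (J c) := by
      rw [hJ0]
      constructor
      · simp only [hudef]; linarith
      · simp only [hudef]; linarith
    have hv_mem : v ∈ Icc (J 0) (J c) := by
      rw [hJ0]
      constructor
      · simp only [hvdef]; linarith
      · simp only [hvdef]; linarith
    obtain ⟨x0, hx0m, hJx0⟩ := intermediate_value_Icc hc0 hJcont.continuousOn hu_mem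
    obtain ⟨x1, hx1m, hJx1⟩ := intermediate_value_Icc hc0 hJcont.continuousOn hv_mem
    have hx01 : x0 < x1 := by
      by_contra hcon
      push_neg at hcon
      have := hJmono hcon
      rw [hJx0, hJx1] at this
      simp only [hudef, hvdef] at this
      linarith
    have hx0Db : x0 ∈ Db := ⟨hx0m.1,
      le_trans (ENNReal.ofReal_le_ofReal hx0m.2) hω0D.2.le⟩
    have hx1Db : x1 ∈ Db := ⟨hx1m.1,
      le_trans (ENNReal.ofReal_le_ofReal hx1m.2) hω0D.2.le⟩
    have hsub1 : {ω | z₂ < J (X ω)} ⊆ {ω | x1 < X ω} := by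
      intro ω hω
      simp only [mem_setOf_eq] at hω ⊢
      by_contra hcon
      push_neg at hcon
      have := hJmono hcon
      rw [hJx1] at this
      simp only [hvdef] at this hω
      linarith
    have hsub2 : {ω | x0 < X ω} ⊆ {ω | z₁ < J (X ω)} := by
      intro ω hω
      simp only [mem_setOf_eq] at hω ⊢
      have := hJmono hω.le
      rw [hJx0] at this
      simp only [hudef] at this
      linarith
    have h1 : S x0 ≤ T z₁ := by
      rw [hS]
      exact ENNReal.toReal_mono (measure_ne_top μ _) (measure_mono hsub2)
    have h2 : T z₂ ≤ S x1 := by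
      rw [hS]
      exact ENNReal.toReal_mono (measure_ne_top μ _) (measure_mono hsub1)
    have h3 : S x1 < S x0 := hSanti hx0Db hx1Db hx01
    linarith
  -- THE KEY LEMMA
  have hcaseA : ∀ p c : ℝ, 0 ≤ c → ENNReal.ofReal c ≤ M → S c = p →
      volume ({z | p < T z} ∩ Ioi 0) = ∫⁻ x in D ∩ {x | p < S x}, ENNReal.ofReal (q x) := by
    intro p c hc0 hcM hSc
    have hcDb : c ∈ Db := ⟨hc0, hcM⟩
    have hsetL : {z | p < T z} ∩ Ioi 0 = Ioo 0 (J c) := by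
      ext z
      simp only [mem_inter_iff, mem_setOf_eq, mem_Ioi, mem_Ioo]
      constructor
      · rintro ⟨hTz, hz⟩
        refine ⟨hz, ?_⟩
        by_contra hcon
        push_neg at hcon
        have hsub : {ω | z < J (X ω)} ⊆ {ω | c < X ω} := by
          intro ω hω
          simp only [mem_setOf_eq] at hω ⊢
          by_contra hcon2
          push_neg at hcon2
          have := hJmono hcon2
          linarith
        have hle : T z ≤ S c := by
          rw [hS]
          exact ENNReal.toReal_mono (measure_ne_top μ _) (measure_mono hsub)
        rw [hSc] at hle
        linarith
      · rintro ⟨hz0, hzJ⟩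
        refine ⟨?_, hz0⟩
        set u := (z + J c)/2 with hu
        have hu_mem : u ∈ Icc (J 0) (J c) := by
          rw [hJ0]
          exact ⟨by simp only [hu]; linarith, by simp only [hu]; linarith⟩
        obtain ⟨x0, hx0m, hJx0⟩ := intermediate_value_Icc hc0 hJcont.continuousOn hu_mem
        have hx0c : x0 < c := by
          by_contra hcon
          push_neg at hcon
          have := hJmono hcon
          rw [hJx0] at this
          simp only [hu] at this
          linarith
        have hsub : {ω | x0 < X ω} ⊆ {ω | z < J (X ω)} := by
          intro ω hω
          simp only [mem_setOf_eq] at hω ⊢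
          have := hJmono hω.le
          rw [hJx0] at this
          simp only [hu] at this
          linarith
        have h1 : S x0 ≤ T z := by
          rw [hS]
          exact ENNReal.toReal_mono (measure_ne_top μ _) (measure_mono hsub)
        have h2 : S c < S x0 := hSanti
          ⟨hx0m.1, le_trans (ENNReal.ofReal_le_ofReal hx0m.2) hcM⟩ hcDb hx0c
        rw [hSc] at h2
        linarith
    have hsetR : D ∩ {x | p < S x} = Ico 0 c := by
      ext x
      simp only [mem_inter_iff, mem_setOf_eq, mem_Ico, hDdef]
      constructor
      · rintro ⟨⟨hx0, hxM⟩, hpS⟩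
        refine ⟨hx0, ?_⟩
        by_contra hcon
        push_neg at hcon
        have hle : S x ≤ S c := hSanti.antitoneOn hcDb ⟨hx0, hxM.le⟩ hcon
        rw [hSc] at hle
        linarith
      · rintro ⟨hx0, hxc⟩
        have hxM : ENNReal.ofReal x < M :=
          lt_of_lt_of_le ((ENNReal.ofReal_lt_ofReal_iff_of_nonneg hx0).2 hxc) hcM
        refine ⟨⟨hx0, hxM⟩, ?_⟩
        have hlt := hSanti ⟨hx0, hxM.le⟩ hcDb hxc
        rw [hSc] at hlt
        exact hlt
    rw [hsetL, hsetR, Real.volume_Ioo, hJlint c hc0, sub_zero]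
  have hKey : ∀ p : ℝ, 0 ≤ p →
      volume ({z | p < T z} ∩ Ioi 0) = ∫⁻ x in D ∩ {x | p < S x}, ENNReal.ofReal (q x) := by
    intro p hp
    by_cases hroot : ∃ c : ℝ, 0 ≤ c ∧ ENNReal.ofReal c ≤ M ∧ S c = p
    · obtain ⟨c, h1, h2, h3⟩ := hroot
      exact hcaseA p c h1 h2 h3
    · push_neg at hroot
      by_cases hp0 : S 0 ≤ p
      · have hL : {z | p < T z} ∩ Ioi 0 = ∅ := by
          apply eq_empty_iff_forall_notMem.2
          rintro z ⟨hTz, hz⟩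
          simp only [mem_setOf_eq] at hTz
          simp only [mem_Ioi] at hz
          have h1 := hTleS z hz.le
          have h2 : S z ≤ S 0 := hSanti' hz.le
          linarith
        have hR : D ∩ {x | p < S x} = ∅ := by
          apply eq_empty_iff_forall_notMem.2
          rintro x ⟨hxD, hpS⟩
          simp only [mem_setOf_eq] at hpS
          have : S x ≤ S 0 := hSanti' hxD.1
          linarith
        rw [hL, hR]
        simp
      · push_neg at hp0
        have hMt : M = ⊤ := by
          by_contra hMt
          have hIcc : Icc (0:ℝ) M.toReal ⊆ Db := fun y hy =>
            ⟨hy.1, le_trans (ENNReal.ofReal_le_ofReal hy.2)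
              (le_of_eq (ENNReal.ofReal_toReal hMt))⟩
          have hiv := intermediate_value_Icc' (a := (0:ℝ)) (b := M.toReal)
            ENNReal.toReal_nonneg (hScont.mono hIcc)
          have hpmem : p ∈ Icc (S M.toReal) (S 0) := ⟨by rw [hSm0 hMt]; exact hp, hp0.le⟩
          obtain ⟨c, hcm, hSc⟩ := hiv hpmem
          exact hroot c hcm.1 (hIcc hcm).2 hSc
        have hp0' : p = 0 := by
          by_contra hpne
          have hppos : 0 < p := lt_of_le_of_ne hp (Ne.symm hpne)
          obtain ⟨b, hb0, hSb⟩ := hSsmall p hppos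
          have hiv := intermediate_value_Icc' (a := (0:ℝ)) (b := b) hb0
            (hScont.mono (fun y hy => ⟨hy.1, by simp [hMt]⟩))
          obtain ⟨c, hcm, hSc⟩ := hiv ⟨hSb, hp0.le⟩
          exact hroot c hcm.1 (by simp [hMt]) hSc
        subst hp0'
        have hall : ∀ x : ℝ, 0 ≤ x → 0 < S x := by
          intro x hx
          rcases lt_or_ge 0 (S x) with hgt | hle
          · exact hgt
          · exact absurd (le_antisymm hle (hSnn x)) (hroot x hx (by simp [hMt]))
        have hDIci : D = Ici (0:ℝ) := by
          ext x
          simp [hDdef, hMt]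
        have hRseteq : D ∩ {x | 0 < S x} = D :=
          inter_eq_left.2 fun x hx => hall x hx.1
        set L := ∫⁻ x in D, ENNReal.ofReal (q x) with hLdef
        have hLsup : L = ⨆ n : ℕ, ENNReal.ofReal (J n) := by
          rw [hLdef, hDIci]
          calc ∫⁻ x in Ici (0:ℝ), ENNReal.ofReal (q x)
              = ∫⁻ x, (Ici (0:ℝ)).indicator (fun y => ENNReal.ofReal (q y)) x :=
                (lintegral_indicator measurableSet_Ici _).symm
            _ = ∫⁻ x, ⨆ n : ℕ, (Ico (0:ℝ) (n:ℝ)).indicator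
                  (fun y => ENNReal.ofReal (q y)) x := by
                congr 1
                funext x
                rcases lt_or_ge x 0 with hx | hx
                · rw [Set.indicator_of_notMem (by simpa using hx.not_ge)]
                  symm
                  simp only [ENNReal.iSup_eq_zero]
                  intro n
                  exact Set.indicator_of_notMem (fun hmem => absurd hmem.1 hx.not_ge) _
                · rw [Set.indicator_of_mem (mem_Ici.2 hx)]
                  apply le_antisymm
                  · obtain ⟨n, hn⟩ := exists_nat_gt x
                    have hxmem : x ∈ Ico (0:ℝ) (n:ℝ) := ⟨hx, hn⟩
                    have heq : (Ico (0:ℝ) (n:ℝ)).indicator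
                        (fun t0 : ℝ => ENNReal.ofReal (q t0)) x = ENNReal.ofReal (q x) :=
                      Set.indicator_of_mem hxmem _
                    rw [← heq]
                    exact le_iSup (fun n : ℕ => (Ico (0:ℝ) (n:ℝ)).indicator
                      (fun t0 : ℝ => ENNReal.ofReal (q t0)) x) n
                  · apply iSup_le
                    intro n
                    by_cases hmem : x ∈ Ico (0:ℝ) (n:ℝ)
                    · exact le_of_eq (Set.indicator_of_mem hmem _)
                    · simp [Set.indicator_of_notMem hmem]
            _ = ⨆ n : ℕ, ∫⁻ x, (Ico (0:ℝ) (n:ℝ)).indicator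
                  (fun y => ENNReal.ofReal (q y)) x := by
                apply lintegral_iSup
                · intro n
                  exact (ENNReal.measurable_ofReal.comp hqmeas).indicator measurableSet_Ico
                · intro a b hab x
                  exact Set.indicator_le_indicator_of_subset
                    (Ico_subset_Ico_right (Nat.cast_le.2 hab)) (fun _ => zero_le) x
            _ = ⨆ n : ℕ, ENNReal.ofReal (J n) := by
                congr 1
                funext n
                rw [lintegral_indicator measurableSet_Ico, hJlint _ n.cast_nonneg]
        have hLset : {z | 0 < T z} ∩ Ioi 0 = {z | ENNReal.ofReal z < L} ∩ Ioi 0 := by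
          ext z
          simp only [mem_inter_iff, mem_setOf_eq, mem_Ioi]
          constructor
          · rintro ⟨hTz, hz⟩
            refine ⟨?_, hz⟩
            have hTm : Tm z ≠ 0 := by
              intro h0
              rw [hTdef] at hTz
              simp only [h0, ENNReal.toReal_zero, lt_self_iff_false] at hTz
            have hTm' : μ ({ω | z < J (X ω)} ∩ {ω | X ω ∈ D}) ≠ 0 := by
              rw [measure_inter_conull hfull]
              exact hTm
            obtain ⟨ω0, hω0, hω0D⟩ := nonempty_of_measure_ne_zero hTm'
            have h1 : ENNReal.ofReal z < ENNReal.ofReal (J (X ω0)) :=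
              (ENNReal.ofReal_lt_ofReal_iff_of_nonneg hz.le).2 hω0
            refine lt_of_lt_of_le h1 ?_
            rw [← hJlint (X ω0) (hXnonneg ω0), hLdef, hDIci]
            exact lintegral_mono_set (fun y hy => hy.1)
          · rintro ⟨hzL, hz⟩
            refine ⟨?_, hz⟩
            rw [hLsup, lt_iSup_iff] at hzL
            obtain ⟨n, hn⟩ := hzL
            have hzn : z < J n := (ENNReal.ofReal_lt_ofReal_iff_of_nonneg hz.le).1 hn
            set u := (z + J n)/2 with hu
            have hu_mem : u ∈ Icc (J 0) (J (n:ℝ)) := by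
              rw [hJ0]
              exact ⟨by simp only [hu]; linarith, by simp only [hu]; linarith⟩
            obtain ⟨x0, hx0m, hJx0⟩ :=
              intermediate_value_Icc n.cast_nonneg hJcont.continuousOn hu_mem
            have hsub : {ω | x0 < X ω} ⊆ {ω | z < J (X ω)} := by
              intro ω hω
              simp only [mem_setOf_eq] at hω ⊢
              have := hJmono hω.le
              rw [hJx0] at this
              simp only [hu] at this
              linarith
            have h1 : S x0 ≤ T z := by
              rw [hS]
              exact ENNReal.toReal_mono (measure_ne_top μ _) (measure_mono hsub)
            have h2 : 0 < S x0 := hall x0 hx0m.1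
            linarith
        rw [hRseteq, hLset, ← hLdef]
        by_cases hLtop : L = ⊤
        · rw [hLtop]
          have heq : {z | ENNReal.ofReal z < (⊤:ℝ≥0∞)} ∩ Ioi 0 = Ioi (0:ℝ) := by
            apply inter_eq_right.2
            intro z _
            simp only [mem_setOf_eq]
            exact ENNReal.ofReal_lt_top
          rw [heq, Real.volume_Ioi]
        · have heq : {z | ENNReal.ofReal z < L} ∩ Ioi 0 = Ioo 0 L.toReal := by
            ext z
            simp only [mem_inter_iff, mem_setOf_eq, mem_Ioi, mem_Ioo]
            constructor
            · rintro ⟨h1, h2⟩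
              exact ⟨h2, (ENNReal.ofReal_lt_iff_lt_toReal h2.le hLtop).1 h1⟩
            · rintro ⟨h1, h2⟩
              exact ⟨(ENNReal.ofReal_lt_iff_lt_toReal h1.le hLtop).2 h2, h1⟩
          rw [heq, Real.volume_Ioo, sub_zero, ENNReal.ofReal_toReal hLtop]
  -- the clamped distortion function and its Stieltjes measure
  set ht : ℝ → ℝ := fun s => h (max 0 (min 1 s)) with htdef
  have hclamp : ∀ s : ℝ, max 0 (min 1 s) ∈ Set.Icc (0:ℝ) 1 :=
    fun s => ⟨le_max_left _ _, max_le zero_le_one (min_le_left _ _)⟩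
  have htmono : Monotone ht := by
    intro a b hab
    apply hmono (hclamp a) (hclamp b)
    exact max_le_max le_rfl (min_le_min le_rfl hab)
  have ht0 : ∀ s ≤ (0:ℝ), ht s = 0 := by
    intro s hs
    rw [htdef]
    simp only []
    have : max 0 (min 1 s) = 0 := by
      apply max_eq_left
      exact le_trans (min_le_right _ _) hs
    rw [this, hh0]
  have htnn : ∀ s, 0 ≤ ht s := by
    intro s
    rw [← hh0]
    exact hmono ⟨le_rfl, zero_le_one⟩ (hclamp s) (le_max_left _ _)
  have htid : ∀ s : ℝ, 0 ≤ s → s ≤ 1 → ht s = h s := by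
    intro s h0 h1
    rw [htdef]
    simp only []
    rw [min_eq_right h1, max_eq_right h0]
  set ν : Measure ℝ := htmono.stieltjesFunction.measure with hνdef
  haveI hνfin : IsFiniteMeasure ν := by
    have htop : Tendsto (htmono.stieltjesFunction : ℝ → ℝ) atTop (𝓝 (h 1)) := by
      apply Tendsto.congr' (f₁ := fun _ => h 1) _ tendsto_const_nhds
      filter_upwards [Ioi_mem_atTop (1:ℝ)] with b hb
      have h1 : ht b = h 1 := by
        rw [htdef]
        simp only []
        rw [min_eq_left hb.le, max_eq_right zero_le_one]
      have h2 : ht (b+1) = h 1 := by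
        rw [htdef]
        simp only []
        rw [min_eq_left (by linarith [(mem_Ioi.1 hb).le] : (1:ℝ) ≤ b + 1), max_eq_right zero_le_one]
      have hub : htmono.stieltjesFunction b ≤ ht (b+1) := htmono.rightLim_le (by linarith)
      have hlb : ht b ≤ htmono.stieltjesFunction b := htmono.le_rightLim le_rfl
      rw [h1] at hlb
      rw [h2] at hub
      linarith
    exact htmono.stieltjesFunction.isFiniteMeasure
      (aux_stieltjes_tendsto_atBot htmono ht0) htop
  have hν0 : ν (Iio 0) = 0 := aux_nu_Iio_zero htmono ht0 htnn le_rfl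
  have hνcont : ∀ {s : ℝ}, ContinuousAt ht s → ν (Iio s) = ENNReal.ofReal (ht s) :=
    fun hc => aux_nu_Iio_cont htmono ht0 htnn hc
  -- countable set of bad values
  have hB : {s : ℝ | ¬ ContinuousAt ht s}.Countable := htmono.countable_not_continuousAt
  -- the main lintegral identity
  have hAE1 : ∀ᵐ z ∂(volume.restrict (Ioi (0:ℝ))),
      ENNReal.ofReal (ht (T z)) = ν (Iio (T z)) := by
    set Bad : Set ℝ :=
      ⋃ s ∈ {s : ℝ | ¬ ContinuousAt ht s}, {z | 0 < z ∧ T z = s ∧ 0 < T z} with hBaddef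
    have hBad0 : volume Bad = 0 := by
      apply Set.Countable.measure_zero
      apply Countable.biUnion hB
      intro s _
      apply Set.Subsingleton.countable
      intro z1 hz1 z2 hz2
      simp only [mem_setOf_eq] at hz1 hz2
      rcases lt_trichotomy z1 z2 with hlt | heq | hgt
      · exfalso
        have := hTinj z1 z2 hz1.1 hlt hz2.2.2
        rw [hz1.2.1, hz2.2.1] at this
        exact lt_irrefl s this
      · exact heq
      · exfalso
        have := hTinj z2 z1 hz2.1 hgt hz1.2.2
        rw [hz1.2.1, hz2.2.1] at this
        exact lt_irrefl s this
    have hnBad : ∀ᵐ z ∂volume, z ∉ Bad := by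
      rw [ae_iff]
      convert hBad0 using 2
      ext z
      simp
    filter_upwards [ae_restrict_mem measurableSet_Ioi, ae_restrict_of_ae hnBad] with z hz hzB
    rcases eq_or_lt_of_le (hTnn z) with hT0 | hTpos
    · rw [← hT0, ht0 0 le_rfl, hν0, ENNReal.ofReal_zero]
    · have hcont : ContinuousAt ht (T z) := by
        by_contra hnc
        exact hzB (mem_biUnion hnc ⟨hz, rfl, hTpos⟩)
      exact (hνcont hcont).symm
  have hAE2 : ∀ᵐ x ∂(volume.restrict D),
      ENNReal.ofReal (q x) * ν (Iio (S x)) = ENNReal.ofReal (ht (S x) * q x) := by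
    set Bad2 : Set ℝ :=
      ⋃ s ∈ {s : ℝ | ¬ ContinuousAt ht s}, {x | x ∈ D ∧ S x = s} with hBad2def
    have hBad20 : volume Bad2 = 0 := by
      apply Set.Countable.measure_zero
      apply Countable.biUnion hB
      intro s _
      apply Set.Subsingleton.countable
      intro x1 hx1 x2 hx2
      simp only [mem_setOf_eq] at hx1 hx2
      exact hSanti.injOn (hDsub hx1.1) (hDsub hx2.1) (hx1.2.trans hx2.2.symm)
    have hnBad : ∀ᵐ x ∂volume, x ∉ Bad2 := by
      rw [ae_iff]
      convert hBad20 using 2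
      ext x
      simp
    filter_upwards [ae_restrict_mem hDmeas, ae_restrict_of_ae hnBad] with x hxD hxB
    have hcont : ContinuousAt ht (S x) := by
      by_contra hnc
      exact hxB (mem_biUnion hnc ⟨hxD, rfl⟩)
    rw [hνcont hcont, ← ENNReal.ofReal_mul (hq01 x).1, mul_comm (q x)]
  have hGmeas : Measurable (fun w : ℝ × ℝ => if w.2 < T w.1 then (1:ℝ≥0∞) else 0) :=
    Measurable.ite (measurableSet_lt measurable_snd (hTmeas.comp measurable_fst))
      measurable_const measurable_const
  have hHmeas : Measurable
      (fun w : ℝ × ℝ => if w.1 < S w.2 then ENNReal.ofReal (q w.2) else 0) :=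
    Measurable.ite (measurableSet_lt measurable_fst (hSmeas.comp measurable_snd))
      (ENNReal.measurable_ofReal.comp (hqmeas.comp measurable_snd)) measurable_const
  have hMAIN : (∫⁻ z in Ioi (0:ℝ), ENNReal.ofReal (ht (T z)))
      = ∫⁻ x in D, ENNReal.ofReal (ht (S x) * q x) := by
    calc ∫⁻ z in Ioi (0:ℝ), ENNReal.ofReal (ht (T z))
        = ∫⁻ z in Ioi (0:ℝ), ν (Iio (T z)) := lintegral_congr_ae hAE1
      _ = ∫⁻ z in Ioi (0:ℝ), ∫⁻ p, (if p < T z then (1:ℝ≥0∞) else 0) ∂ν := by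
          apply lintegral_congr
          intro z
          rw [← lintegral_indicator_one measurableSet_Iio]
          apply lintegral_congr
          intro p
          simp [Set.indicator_apply]
      _ = ∫⁻ p, ∫⁻ z in Ioi (0:ℝ), (if p < T z then (1:ℝ≥0∞) else 0) ∂volume ∂ν :=
          lintegral_lintegral_swap hGmeas.aemeasurable
      _ = ∫⁻ p, volume ({z | p < T z} ∩ Ioi 0) ∂ν := by
          apply lintegral_congr
          intro p
          have h1 : ∀ z, (if p < T z then (1:ℝ≥0∞) else 0)
              = ({z | p < T z}).indicator (fun _ => (1:ℝ≥0∞)) z := fun z => by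
            simp [Set.indicator_apply]
          rw [lintegral_congr h1,
            lintegral_indicator_const (measurableSet_lt measurable_const hTmeas),
            Measure.restrict_apply (measurableSet_lt measurable_const hTmeas), one_mul]
      _ = ∫⁻ p, (∫⁻ x in D ∩ {x | p < S x}, ENNReal.ofReal (q x)) ∂ν := by
          apply lintegral_congr_ae
          have hae : ∀ᵐ p ∂ν, 0 ≤ p := by
            rw [ae_iff]
            apply measure_mono_null _ hν0
            intro p hp
            simp only [mem_setOf_eq, not_le] at hp
            exact hp
          filter_upwards [hae] with p hp
          exact hKey p hp
      _ = ∫⁻ p, ∫⁻ x in D, (if p < S x then ENNReal.ofReal (q x) else 0) ∂volume ∂ν := by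
          apply lintegral_congr
          intro p
          symm
          have h1 : ∀ x, (if p < S x then ENNReal.ofReal (q x) else 0)
              = ({x | p < S x}).indicator (fun y => ENNReal.ofReal (q y)) x := fun x => by
            simp [Set.indicator_apply]
          rw [lintegral_congr h1,
            lintegral_indicator (measurableSet_lt measurable_const hSmeas),
            Measure.restrict_restrict (measurableSet_lt measurable_const hSmeas),
            inter_comm ({x | p < S x}) D]
      _ = ∫⁻ x in D, ∫⁻ p, (if p < S x then ENNReal.ofReal (q x) else 0) ∂ν ∂volume :=
          lintegral_lintegral_swap hHmeas.aemeasurable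
      _ = ∫⁻ x in D, ENNReal.ofReal (q x) * ν (Iio (S x)) ∂volume := by
          apply lintegral_congr
          intro x
          have h1 : ∀ p, (if p < S x then ENNReal.ofReal (q x) else 0)
              = (Iio (S x)).indicator (fun _ => ENNReal.ofReal (q x)) p := fun p => by
            simp [Set.indicator_apply]
          rw [lintegral_congr h1, lintegral_indicator_const measurableSet_Iio]
      _ = ∫⁻ x in D, ENNReal.ofReal (ht (S x) * q x) := lintegral_congr_ae hAE2
  -- conclude
  have hLHSfun : ∀ z : ℝ, h ((μ {ω | z < I (X ω)}).toReal) = ht (T z) := by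
    intro z
    rw [hIJ z, htid (T z) (hTnn z) (hTle1 z)]
  have hRHSfun : ∀ x : ℝ, h (S x) * q x = ht (S x) * q x := fun x => by
    rw [htid (S x) (hSnn x) (hSle1 x)]
  calc ∫ z in Ioi (0:ℝ), h ((μ {ω | z < I (X ω)}).toReal)
      = ∫ z in Ioi (0:ℝ), ht (T z) := by simp only [hLHSfun]
    _ = (∫⁻ z in Ioi (0:ℝ), ENNReal.ofReal (ht (T z))).toReal :=
        integral_eq_lintegral_of_nonneg_ae (Eventually.of_forall fun z => htnn (T z))
          ((htmono.measurable.comp hTmeas).aestronglyMeasurable)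
    _ = (∫⁻ x in D, ENNReal.ofReal (ht (S x) * q x)).toReal := by rw [hMAIN]
    _ = ∫ x in D, ht (S x) * q x :=
        (integral_eq_lintegral_of_nonneg_ae
          (Eventually.of_forall fun x => mul_nonneg (htnn (S x)) (hq01 x).1)
          (((htmono.measurable.comp hSmeas).mul hqmeas).aestronglyMeasurable)).symm
    _ = ∫ x in D, h (S x) * q x := by simp only [← hRHSfun]
end
end

section
/- The variance of the retained loss under a deductible is nondecreasing in the deductible: define w₁(d) = ∫_0^d S_X(x) dx and w₂(d) = 2∫_0^d x·S_X(x) dx, so that w₁(d) = E[X ∧ d], w₂(d) = E[(X ∧ d)²] and w(d) := w₂(d) − w₁(d)² = Var(X ∧ d). Then w is differentiable on (0,M) with w'(d) = 2·S_X(d)·(d − w₁(d)) ≥ 0; in particular d ↦ Var(X ∧ d) is nondecreasing on [0,M]. -/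
open MeasureTheory Set Filter ENNReal NNReal

noncomputable section

/-- the variance of the retained loss under a deductible is nondecreasing
in the deductible: with `w₁(d) = ∫_0^d S_X = E[X ∧ d]`, `w₂(d) = 2∫_0^d x·S_X(x) dx
= E[(X ∧ d)²]` and `w = w₂ − w₁² = Var(X ∧ d)`, the function `w` is differentiable on
`(0,M)` with `w'(d) = 2·S_X(d)·(d − w₁(d)) ≥ 0`, and `d ↦ Var(X ∧ d)` is nondecreasing
on `[0,M]`. -/
theorem variance_of_capped_loss_monotone
    {Ω : Type*} [MeasurableSpace Ω] (μ : Measure Ω) [IsProbabilityMeasure μ]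
    -- the probability space is atomless
    (hatomless : ∀ s : Set Ω, MeasurableSet s → 0 < μ s →
      ∃ t, t ⊆ s ∧ MeasurableSet t ∧ 0 < μ t ∧ μ t < μ s)
    -- the nonnegative integrable loss X
    (X : Ω → ℝ) (hXmeas : Measurable X) (hXnonneg : ∀ ω, 0 ≤ X ω)
    (hXint : Integrable X μ)
    -- the essential supremum M ∈ (0,∞] of X
    (M : ℝ≥0∞) (hM : 0 < M)
    (hXleM : ∀ᵐ ω ∂μ, ENNReal.ofReal (X ω) ≤ M)
    -- the survival function of X, continuous and strictly decreasing on [0,M]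
    (S : ℝ → ℝ) (hS : S = fun x => (μ {ω | x < X ω}).toReal)
    (hScont : ContinuousOn S {x : ℝ | 0 ≤ x ∧ ENNReal.ofReal x ≤ M})
    (hSanti : StrictAntiOn S {x : ℝ | 0 ≤ x ∧ ENNReal.ofReal x ≤ M})
    -- X has finite second moment
    (hX2 : Integrable (fun ω => X ω ^ 2) μ)
    -- the auxiliary functions w₁ and w₂
    (w₁ w₂ : ℝ → ℝ)
    (hw₁ : w₁ = fun d => ∫ x in (0:ℝ)..d, S x)
    (hw₂ : w₂ = fun d => 2 * ∫ x in (0:ℝ)..d, x * S x) :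
    (∀ d : ℝ, 0 ≤ d → ENNReal.ofReal d ≤ M →
      w₁ d = (∫ ω, min (X ω) d ∂μ) ∧
      w₂ d = (∫ ω, (min (X ω) d) ^ 2 ∂μ) ∧
      w₂ d - (w₁ d) ^ 2 = ProbabilityTheory.variance (fun ω => min (X ω) d) μ) ∧
    (∀ d : ℝ, 0 < d → ENNReal.ofReal d < M →
      HasDerivAt (fun t => w₂ t - (w₁ t) ^ 2) (2 * S d * (d - w₁ d)) d ∧
      0 ≤ 2 * S d * (d - w₁ d)) ∧
    MonotoneOn (fun d => ProbabilityTheory.variance (fun ω => min (X ω) d) μ)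
      {d : ℝ | 0 ≤ d ∧ ENNReal.ofReal d ≤ M} := by
  -- basic facts about S
  have Santi : Antitone S := by
    intro x y hxy
    rw [hS]
    exact ENNReal.toReal_mono (measure_ne_top μ _)
      (measure_mono fun a ha => lt_of_le_of_lt hxy ha)
  have Snonneg : ∀ x, 0 ≤ S x := by intro x; rw [hS]; exact ENNReal.toReal_nonneg
  have Sle1 : ∀ x, S x ≤ 1 := by
    intro x; rw [hS]
    simpa using ENNReal.toReal_mono (by simp) (prob_le_one (μ := μ) (s := {ω | x < X ω}))
  have Sii : ∀ a b : ℝ, IntervalIntegrable S volume a b := fun a b =>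
    Santi.intervalIntegrable
  have Smulii : ∀ a b : ℝ, IntervalIntegrable (fun x => x * S x) volume a b := fun a b =>
    (Sii a b).continuousOn_mul continuousOn_id
  -- w₁ d ≤ d for d ≥ 0
  have hw₁le : ∀ d : ℝ, 0 ≤ d → w₁ d ≤ d := by
    intro d hd
    rw [hw₁]
    calc ∫ x in (0:ℝ)..d, S x ≤ ∫ x in (0:ℝ)..d, (1:ℝ) :=
          intervalIntegral.integral_mono_on hd (Sii 0 d) intervalIntegrable_const
            fun x _ => Sle1 x
      _ = d := by simp
  -- part 1
  have part1 : ∀ d : ℝ, 0 ≤ d → ENNReal.ofReal d ≤ M →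
      w₁ d = (∫ ω, min (X ω) d ∂μ) ∧
      w₂ d = (∫ ω, (min (X ω) d) ^ 2 ∂μ) ∧
      w₂ d - (w₁ d) ^ 2 = ProbabilityTheory.variance (fun ω => min (X ω) d) μ := by
    intro d hd hdM
    set Y : Ω → ℝ := fun ω => min (X ω) d with hY
    have Ymeas : Measurable Y := hXmeas.min measurable_const
    have Ynonneg : ∀ ω, 0 ≤ Y ω := fun ω => le_min (hXnonneg ω) hd
    have Yled : ∀ ω, Y ω ≤ d := fun ω => min_le_right _ _
    have Yint : Integrable Y μ := by
      refine Integrable.mono' (integrable_const d) Ymeas.aestronglyMeasurable ?_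
      exact ae_of_all _ fun ω => by
        rw [Real.norm_eq_abs, abs_of_nonneg (Ynonneg ω)]; exact Yled ω
    have Y2int : Integrable (fun ω => Y ω ^ 2) μ := by
      refine Integrable.mono' (integrable_const (d ^ 2))
        ((Ymeas.pow_const 2).aestronglyMeasurable) ?_
      exact ae_of_all _ fun ω => by
        rw [Real.norm_eq_abs, abs_of_nonneg (sq_nonneg _)]
        exact pow_le_pow_left₀ (Ynonneg ω) (Yled ω) 2
    have hne : ∀ᵐ t : ℝ, t ≠ d := by
      rw [ae_iff]
      simpa [not_not, setOf_eq_eq_singleton] using measure_singleton d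
    -- first moment
    have hm1 : (∫ ω, Y ω ∂μ) = ∫ x in (0:ℝ)..d, S x := by
      rw [Yint.integral_eq_integral_meas_lt (ae_of_all _ Ynonneg),
        intervalIntegral.integral_of_le hd,
        setIntegral_eq_of_subset_of_ae_diff_eq_zero nullMeasurableSet_Ioi
          Ioc_subset_Ioi_self ?side1]
      case side1 =>
        refine ae_of_all _ fun t ht => ?_
        have hdt : d < t := by
          simp only [mem_diff, mem_Ioi, mem_Ioc, not_and, not_le] at ht
          exact ht.2 ht.1
        have hempty : {a | t < Y a} = ∅ := by
          ext a
          simp only [mem_setOf_eq, mem_empty_iff_false, iff_false, not_lt]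
          exact (Yled a).trans hdt.le
        simp [hempty]
      apply setIntegral_congr_ae measurableSet_Ioc
      filter_upwards [hne] with t htd hmem
      have htlt : t < d := lt_of_le_of_ne hmem.2 htd
      rw [hS]
      congr 2
      ext a
      simp only [mem_setOf_eq, hY, lt_min_iff]
      exact ⟨fun h => h.1, fun h => ⟨h, htlt⟩⟩
    -- the square of the capped variable
    have hsq : ∀ ω, Y ω ^ 2 = min (X ω ^ 2) (d ^ 2) := by
      intro ω
      rcases le_total (X ω) d with h | h
      · rw [hY]
        simp only [min_eq_left h, min_eq_left (pow_le_pow_left₀ (hXnonneg ω) h 2)]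
      · rw [hY]
        simp only [min_eq_right h, min_eq_right (pow_le_pow_left₀ hd h 2)]
    have hne2 : ∀ᵐ t : ℝ, t ≠ d ^ 2 := by
      rw [ae_iff]
      simpa [not_not, setOf_eq_eq_singleton] using measure_singleton (d ^ 2)
    -- second moment
    have hm2 : (∫ ω, Y ω ^ 2 ∂μ) = 2 * ∫ x in (0:ℝ)..d, x * S x := by
      rw [Y2int.integral_eq_integral_meas_lt (ae_of_all _ fun ω => sq_nonneg _),
        setIntegral_eq_of_subset_of_ae_diff_eq_zero nullMeasurableSet_Ioi
          (Ioc_subset_Ioi_self : Ioc (0:ℝ) (d ^ 2) ⊆ Ioi 0) ?side2]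
      case side2 =>
        refine ae_of_all _ fun t ht => ?_
        have hdt : d ^ 2 < t := by
          simp only [mem_diff, mem_Ioi, mem_Ioc, not_and, not_le] at ht
          exact ht.2 ht.1
        have hempty : {a | t < Y a ^ 2} = ∅ := by
          ext a
          simp only [mem_setOf_eq, mem_empty_iff_false, iff_false, not_lt]
          exact le_trans (pow_le_pow_left₀ (Ynonneg a) (Yled a) 2) hdt.le
        simp [hempty]
      have step1 : ∫ t in Ioc 0 (d ^ 2), (μ {a | t < Y a ^ 2}).toReal
          = ∫ t in Ioc 0 (d ^ 2), S (Real.sqrt t) := by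
        apply setIntegral_congr_ae measurableSet_Ioc
        filter_upwards [hne2] with t htd hmem
        have ht0 : 0 < t := hmem.1
        have htlt : t < d ^ 2 := lt_of_le_of_ne hmem.2 htd
        rw [hS]
        congr 2
        ext a
        simp only [mem_setOf_eq, hsq a, lt_min_iff]
        constructor
        · rintro ⟨h1, _⟩
          have hXa : 0 < X a := by nlinarith [hXnonneg a]
          exact (Real.sqrt_lt' hXa).mpr h1
        · intro h
          have hXa : 0 < X a := lt_of_le_of_lt (Real.sqrt_nonneg t) h
          exact ⟨(Real.sqrt_lt' hXa).mp h, htlt⟩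
      refine step1.trans ?_
      -- change of variables t = x ^ 2
      have sub1 : (∫ x in (0:ℝ)..d,
            (2 * x) • ((fun u => S (Real.sqrt u)) ∘ fun x => x ^ 2) x)
          = ∫ u in ((0:ℝ) ^ 2)..(d ^ 2), S (Real.sqrt u) := by
        apply intervalIntegral.integral_comp_smul_deriv' (f := fun x => x ^ 2)
          (f' := fun x => 2 * x) (g := fun u => S (Real.sqrt u))
        · intro x _
          simpa [mul_comm] using hasDerivAt_pow 2 x
        · exact (continuous_const.mul continuous_id).continuousOn
        · have himg : (fun x => x ^ 2) '' (uIcc (0:ℝ) d) ⊆ Icc 0 (d ^ 2) := by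
            rintro u ⟨x, hx, rfl⟩
            rw [uIcc_of_le hd] at hx
            exact ⟨sq_nonneg x, pow_le_pow_left₀ hx.1 hx.2 2⟩
          refine ContinuousOn.mono ?_ himg
          refine hScont.comp Real.continuous_sqrt.continuousOn ?_
          intro t ht
          refine ⟨Real.sqrt_nonneg t, ?_⟩
          have hsle : Real.sqrt t ≤ d := by
            have := Real.sqrt_le_sqrt ht.2
            rwa [Real.sqrt_sq hd] at this
          exact le_trans (ENNReal.ofReal_le_ofReal hsle) hdM
      have lhs_eq : (∫ x in (0:ℝ)..d,
            (2 * x) • ((fun u => S (Real.sqrt u)) ∘ fun x => x ^ 2) x)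
          = ∫ x in (0:ℝ)..d, 2 * (x * S x) := by
        apply intervalIntegral.integral_congr
        intro x hx
        rw [uIcc_of_le hd] at hx
        simp only [Function.comp, smul_eq_mul, Real.sqrt_sq hx.1]
        ring
      calc ∫ t in Ioc 0 (d ^ 2), S (Real.sqrt t)
          = ∫ u in ((0:ℝ) ^ 2)..(d ^ 2), S (Real.sqrt u) := by
            rw [← intervalIntegral.integral_of_le (by positivity : (0:ℝ) ≤ d ^ 2)]
            norm_num
        _ = ∫ x in (0:ℝ)..d, 2 * (x * S x) := by rw [← sub1, lhs_eq]
        _ = 2 * ∫ x in (0:ℝ)..d, x * S x := intervalIntegral.integral_const_mul 2 _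
    -- membership in L²
    have hmem2 : MemLp Y 2 μ :=
      (memLp_two_iff_integrable_sq Ymeas.aestronglyMeasurable).mpr Y2int
    refine ⟨by rw [hw₁]; exact hm1.symm, by rw [hw₂]; exact hm2.symm, ?_⟩
    have e1 : w₁ d = ∫ ω, Y ω ∂μ := by rw [hw₁]; exact hm1.symm
    have e2 : w₂ d = ∫ ω, Y ω ^ 2 ∂μ := by rw [hw₂]; exact hm2.symm
    rw [e1, e2, ProbabilityTheory.variance_eq_sub hmem2]
    rfl
  -- part 2
  have part2 : ∀ d : ℝ, 0 < d → ENNReal.ofReal d < M →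
      HasDerivAt (fun t => w₂ t - (w₁ t) ^ 2) (2 * S d * (d - w₁ d)) d ∧
      0 ≤ 2 * S d * (d - w₁ d) := by
    intro d hd0 hdM
    have hnhds : {x : ℝ | 0 ≤ x ∧ ENNReal.ofReal x ≤ M} ∈ nhds d := by
      rcases eq_or_ne M ⊤ with hMt | hMt
      · exact mem_of_superset (Ioi_mem_nhds hd0) fun x hx => ⟨le_of_lt hx, by simp [hMt]⟩
      · have hdM' : d < M.toReal := (ENNReal.ofReal_lt_iff_lt_toReal hd0.le hMt).mp hdM
        exact mem_of_superset (Ioo_mem_nhds hd0 hdM')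
          fun x hx => ⟨hx.1.le, ENNReal.ofReal_le_of_le_toReal hx.2.le⟩
    have hSc : ContinuousAt S d := hScont.continuousAt hnhds
    have hsm : StronglyMeasurableAtFilter S (nhds d) :=
      Santi.measurable.stronglyMeasurable.stronglyMeasurableAtFilter
    have hD1 : HasDerivAt w₁ (S d) d := by
      rw [hw₁]
      exact intervalIntegral.integral_hasDerivAt_right (Sii 0 d) hsm hSc
    have hD2 : HasDerivAt w₂ (2 * (d * S d)) d := by
      rw [hw₂]
      exact (intervalIntegral.integral_hasDerivAt_right (Smulii 0 d)
        ((measurable_id.mul Santi.measurable).stronglyMeasurable.stronglyMeasurableAtFilter)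
        (continuousAt_id.mul hSc)).const_mul 2
    constructor
    · have h : HasDerivAt (fun t => w₂ t - w₁ t ^ 2)
          (2 * (d * S d) - ((2:ℕ):ℝ) * w₁ d ^ (2 - 1) * S d) d := hD2.sub (hD1.fun_pow 2)
      convert h using 1
      push_cast
      ring
    · exact mul_nonneg (mul_nonneg (by norm_num) (Snonneg d))
        (sub_nonneg.mpr (hw₁le d hd0.le))
  refine ⟨part1, part2, ?_⟩
  -- part 3
  have wcont : Continuous fun t => w₂ t - w₁ t ^ 2 := by
    rw [hw₁, hw₂]
    exact (continuous_const.mul (intervalIntegral.continuous_primitive Smulii 0)).sub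
      ((intervalIntegral.continuous_primitive Sii 0).pow 2)
  have hmonow : MonotoneOn (fun t => w₂ t - w₁ t ^ 2)
      {d : ℝ | 0 ≤ d ∧ ENNReal.ofReal d ≤ M} := by
    rcases eq_or_ne M ⊤ with hMt | hMt
    · have hA : {d : ℝ | 0 ≤ d ∧ ENNReal.ofReal d ≤ M} = Ici 0 := by
        ext x; simp [hMt]
      rw [hA]
      apply monotoneOn_of_deriv_nonneg (convex_Ici 0) wcont.continuousOn
      · intro x hx
        rw [interior_Ici] at hx
        exact ((part2 x hx (by simp [hMt])).1).differentiableAt.differentiableWithinAt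
      · intro x hx
        rw [interior_Ici] at hx
        obtain ⟨hder, hnn⟩ := part2 x hx (by simp [hMt])
        rw [hder.deriv]; exact hnn
    · have hA : {d : ℝ | 0 ≤ d ∧ ENNReal.ofReal d ≤ M} = Icc 0 M.toReal := by
        ext x
        simp [mem_setOf_eq, ENNReal.ofReal_le_iff_le_toReal hMt, mem_Icc]
      rw [hA]
      apply monotoneOn_of_deriv_nonneg (convex_Icc 0 M.toReal) wcont.continuousOn
      · intro x hx
        rw [interior_Icc] at hx
        exact ((part2 x hx.1
          ((ENNReal.ofReal_lt_iff_lt_toReal hx.1.le hMt).mpr hx.2)).1).differentiableAt.differentiableWithinAt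
      · intro x hx
        rw [interior_Icc] at hx
        obtain ⟨hder, hnn⟩ := part2 x hx.1
          ((ENNReal.ofReal_lt_iff_lt_toReal hx.1.le hMt).mpr hx.2)
        rw [hder.deriv]; exact hnn
  intro a ha b hb hab
  simp only
  rw [← (part1 a ha.1 ha.2).2.2, ← (part1 b hb.1 hb.2).2.2]
  exact hmonow ha hb hab
end
end
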